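/- Let E₀ and E i (for i in a finite index type ι) be finite-dimensional real inner product spaces, and for each i let L i : WithLp 2 (E₀ × E i) → ℝ be differentiable. Define the multitask objective F : WithLp 2 (E₀ × PiLp 2 E) → ℝ by F (W₀, W) = ∑ᵢ L i (W₀, W i). Suppose curves W₀ : ℝ → E₀ and W i : ℝ → E i satisfy, for every t, HasDerivAt W₀ (-(∑ᵢ (∇(L i) (W₀ t, W i t)).1)) t and, for each i, HasDerivAt (W i) (-(∇(L i) (W₀ t, W i t)).2) t (the continuous-time analogue of the distributed multitask learning algorithm, where the shared weights descend along the sum of the per-task gradients and each task's weights descend along its own gradient). Then the combined curve t ↦ (W₀ t, fun i => W i t) satisfies, for every t, HasDerivAt (fun t => (W₀ t, fun i => W i t)) (-∇F (W₀ t, fun i => W i t)) t; that is, the distributed scheme is a gradient flow trajectory of the composite multitask objective F. -/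

import Mathlib

open scoped RealInnerProductSpace

section Aux

variable {ι : Type*} [Fintype ι]
    {E₀ : Type*} [NormedAddCommGroup E₀] [InnerProductSpace ℝ E₀]
    {E : ι → Type*} [∀ i, NormedAddCommGroup (E i)] [∀ i, InnerProductSpace ℝ (E i)]

/-- The continuous linear projection `WithLp 2 (E₀ × PiLp 2 E) → WithLp 2 (E₀ × E i)`. -/
noncomputable def mtProj (i : ι) : WithLp 2 (E₀ × PiLp 2 E) →L[ℝ] WithLp 2 (E₀ × E i) :=
  ((WithLp.prodContinuousLinearEquiv 2 ℝ E₀ (E i)).symm.toContinuousLinearMap).comp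
    (((ContinuousLinearMap.fst ℝ E₀ (PiLp 2 E)).prod
      ((ContinuousLinearMap.proj (R := ℝ) (φ := E) i).comp
        (((PiLp.continuousLinearEquiv 2 ℝ E).toContinuousLinearMap).comp
          (ContinuousLinearMap.snd ℝ E₀ (PiLp 2 E))))).comp
      (WithLp.prodContinuousLinearEquiv 2 ℝ E₀ (PiLp 2 E)).toContinuousLinearMap)

omit [Fintype ι] in
lemma mtProj_apply (i : ι) (p : WithLp 2 (E₀ × PiLp 2 E)) :
    mtProj (E₀ := E₀) (E := E) i p = (WithLp.toLp 2 (p.ofLp.1, p.ofLp.2.ofLp i) : WithLp 2 (E₀ × E i)) := rfl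

/-- The continuous linear map assembling `E₀ × Π i, E i` into `E₀ × PiLp 2 E`. -/
noncomputable def mtAssemble : (E₀ × ∀ i, E i) →L[ℝ] E₀ × PiLp 2 E :=
  (ContinuousLinearMap.id ℝ E₀).prodMap
    (PiLp.continuousLinearEquiv 2 ℝ E).symm.toContinuousLinearMap

end Aux

/-- The continuous-time analogue of the distributed multitask learning algorithm is a
gradient flow trajectory of the composite multitask objective
`F (W₀, W) = ∑ i, L i (W₀, W i)`: if the shared weights `W₀` descend along the sum of the
per-task shared-parameter gradients and each task's weights `W i` descend along its own
gradient, then the combined curve `t ↦ (W₀ t, fun i => W i t)` is a gradient flow of `F`. -/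
theorem distributed_multitask_gradient_flow
    {ι : Type*} [Fintype ι]
    {E₀ : Type*} [NormedAddCommGroup E₀] [InnerProductSpace ℝ E₀] [FiniteDimensional ℝ E₀]
    {E : ι → Type*} [∀ i, NormedAddCommGroup (E i)] [∀ i, InnerProductSpace ℝ (E i)]
    [∀ i, FiniteDimensional ℝ (E i)]
    (L : ∀ i, WithLp 2 (E₀ × E i) → ℝ) (hL : ∀ i, Differentiable ℝ (L i))
    (W₀ : ℝ → E₀) (W : ∀ i, ℝ → E i)
    (hW₀ : ∀ t, HasDerivAt W₀
      (-(∑ i, (gradient (L i) (WithLp.toLp 2 (W₀ t, W i t) : WithLp 2 (E₀ × E i))).ofLp.1)) t)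
    (hW : ∀ i, ∀ t, HasDerivAt (W i)
      (-(gradient (L i) (WithLp.toLp 2 (W₀ t, W i t) : WithLp 2 (E₀ × E i))).ofLp.2) t) :
    ∀ t, HasDerivAt
      (fun t => (WithLp.toLp 2 (W₀ t, WithLp.toLp 2 (fun i => W i t)) : WithLp 2 (E₀ × PiLp 2 E)))
      (-gradient
        (fun p : WithLp 2 (E₀ × PiLp 2 E) => ∑ i, L i (WithLp.toLp 2 (p.ofLp.1, p.ofLp.2.ofLp i) : WithLp 2 (E₀ × E i)))
        (WithLp.toLp 2 (W₀ t, WithLp.toLp 2 (fun i => W i t)) : WithLp 2 (E₀ × PiLp 2 E))) t := by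
  intro t
  set p : WithLp 2 (E₀ × PiLp 2 E) := (WithLp.toLp 2 (W₀ t, WithLp.toLp 2 (fun i => W i t)) : WithLp 2 (E₀ × PiLp 2 E)) with hp
  set g : ∀ i, WithLp 2 (E₀ × E i) :=
    fun i => gradient (L i) (WithLp.toLp 2 (W₀ t, W i t) : WithLp 2 (E₀ × E i)) with hgdef
  set G : WithLp 2 (E₀ × PiLp 2 E) :=
    (WithLp.toLp 2 (∑ i, (g i).ofLp.1, WithLp.toLp 2 (fun i => (g i).ofLp.2)) : WithLp 2 (E₀ × PiLp 2 E)) with hGdef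
  have hgi : ∀ i, HasGradientAt (L i) (g i) (WithLp.toLp 2 (W₀ t, W i t) : WithLp 2 (E₀ × E i)) :=
    fun i => ((hL i) _).hasGradientAt
  -- the composite objective has gradient G at p
  have key : HasGradientAt
      (fun p : WithLp 2 (E₀ × PiLp 2 E) => ∑ i, L i (WithLp.toLp 2 (p.ofLp.1, p.ofLp.2.ofLp i) : WithLp 2 (E₀ × E i)))
      G p := by
    rw [hasGradientAt_iff_hasFDerivAt]
    have hD : HasFDerivAt
        (fun p : WithLp 2 (E₀ × PiLp 2 E) => ∑ i, L i (WithLp.toLp 2 (p.ofLp.1, p.ofLp.2.ofLp i) : WithLp 2 (E₀ × E i)))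
        (∑ i, ((InnerProductSpace.toDual ℝ (WithLp 2 (E₀ × E i)) (g i)).comp
          (mtProj (E₀ := E₀) (E := E) i))) p := by
      apply HasFDerivAt.fun_sum
      intro i _
      have h1 : HasFDerivAt (L i) (InnerProductSpace.toDual ℝ (WithLp 2 (E₀ × E i)) (g i))
          (WithLp.toLp 2 (W₀ t, W i t) : WithLp 2 (E₀ × E i)) :=
        (hasGradientAt_iff_hasFDerivAt).mp (hgi i)
      have h2 := (mtProj (E₀ := E₀) (E := E) i).hasFDerivAt (x := p)
      have h3 := h1.comp p h2
      exact h3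
    refine hD.congr_fderiv ?_
    ext u
    simp only [InnerProductSpace.toDual_apply_apply, ContinuousLinearMap.coe_sum',
      Finset.sum_apply, ContinuousLinearMap.coe_comp', Function.comp_apply,
      mtProj_apply]
    simp only [hGdef, WithLp.prod_inner_apply, PiLp.inner_apply, sum_inner, WithLp.ofLp_toLp]
    rw [← Finset.sum_add_distrib]
  have hgrad := key.gradient
  rw [hgrad]
  -- derivative of the combined curve
  have hbase : HasDerivAt (fun t => ((W₀ t, fun i => W i t) : E₀ × ∀ i, E i))
      ((-(∑ i, (g i).ofLp.1), fun i => -((g i).ofLp.2)) : E₀ × ∀ i, E i) t :=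
    (hW₀ t).prodMk (hasDerivAt_pi.2 fun i => hW i t)
  have hder := ((WithLp.prodContinuousLinearEquiv 2 ℝ E₀ (PiLp 2 E)).symm.toContinuousLinearMap.comp
    (mtAssemble (E₀ := E₀) (E := E))).hasFDerivAt.comp_hasDerivAt t hbase
  exact hder
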